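/- Fix a real ξ ≠ 0 and complex constants α_1, …, α_g. Let U ⊆ ℝ^g be a nonempty connected open set on which the function 2 − 𝐮(ξ) never vanishes. If Ψ_1, Ψ_2 : U → ℂ are smooth, nowhere vanishing, and both satisfy 𝓛Ψ_j = ξ⁻¹·Ψ_j and 𝓤_kΨ_j = α_k·Ψ_j for all k = 1, …, g, then there is a constant λ ∈ ℂ with Ψ_1 = λ·Ψ_2 on U. (The space of common eigenfunctions with these eigenvalues is one-dimensional.) -/

import Mathlib

open scoped BigOperators

/-- Partial derivative `∂_i` (1-based index) on functions of `t : Fin g → ℝ`;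
`∂_i ≡ 0` for `i = 0` or `i > g` (in particular `∂_{g+1} ≡ 0`). -/
noncomputable def pd {g : ℕ} {E : Type*} [NormedAddCommGroup E] [NormedSpace ℝ E]
    (i : ℕ) (f : (Fin g → ℝ) → E) : (Fin g → ℝ) → E :=
  fun t => if h : 1 ≤ i ∧ i ≤ g then
    fderiv ℝ f t (Pi.single (⟨i - 1, by omega⟩ : Fin g) 1) else 0

/-- The Schrödinger operator `𝓛 f = ∂_x² f − u₁·f` on complex-valued functions. -/
noncomputable def opLC {g : ℕ} (u : ℕ → (Fin g → ℝ) → ℝ)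
    (f : (Fin g → ℝ) → ℂ) : (Fin g → ℝ) → ℂ :=
  fun t => pd 1 (pd 1 f) t - u 1 t • f t

/-- `𝓐_k f = ∂_x²∂_k f − (1/2)(u₁·∂_k f + ∂_k(u₁·f)) − (1/4)(u_k·∂_x f + ∂_x(u_k·f))`
on complex-valued functions. -/
noncomputable def opAC {g : ℕ} (u : ℕ → (Fin g → ℝ) → ℝ) (k : ℕ)
    (f : (Fin g → ℝ) → ℂ) : (Fin g → ℝ) → ℂ :=
  fun t => pd 1 (pd 1 (pd k f)) t
    - (1/2 : ℝ) • (u 1 t • pd k f t + pd k (fun s => u 1 s • f s) t)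
    - (1/4 : ℝ) • (u k t • pd 1 f t + pd 1 (fun s => u k s • f s) t)

/-- `𝓤_k f = 𝓐_k f − ∂_{k+1} f` on complex-valued functions. -/
noncomputable def opUC {g : ℕ} (u : ℕ → (Fin g → ℝ) → ℝ) (k : ℕ)
    (f : (Fin g → ℝ) → ℂ) : (Fin g → ℝ) → ℂ :=
  fun t => opAC u k f t - pd (k+1) f t

/-- The generating function `𝐮(ξ) = ∑_{i=1}^g u_i ξ^i`. -/
noncomputable def bfu {g : ℕ} (u : ℕ → (Fin g → ℝ) → ℝ) (ξ : ℝ) :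
    (Fin g → ℝ) → ℝ :=
  fun t => ∑ i ∈ Finset.Icc 1 g, u i t * ξ ^ i

/-- `𝐮'(ξ) = ∑_{i=1}^g u_i' ξ^i` (prime is `∂_x = ∂_1`). -/
noncomputable def bfu1 {g : ℕ} (u : ℕ → (Fin g → ℝ) → ℝ) (ξ : ℝ) :
    (Fin g → ℝ) → ℝ :=
  fun t => ∑ i ∈ Finset.Icc 1 g, pd 1 (u i) t * ξ ^ i

/-- `𝐮''(ξ) = ∑_{i=1}^g u_i'' ξ^i`. -/
noncomputable def bfu2 {g : ℕ} (u : ℕ → (Fin g → ℝ) → ℝ) (ξ : ℝ) :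
    (Fin g → ℝ) → ℝ :=
  fun t => ∑ i ∈ Finset.Icc 1 g, pd 1 (pd 1 (u i)) t * ξ ^ i

/-- `𝐮'''(ξ) = ∑_{i=1}^g u_i''' ξ^i`. -/
noncomputable def bfu3 {g : ℕ} (u : ℕ → (Fin g → ℝ) → ℝ) (ξ : ℝ) :
    (Fin g → ℝ) → ℝ :=
  fun t => ∑ i ∈ Finset.Icc 1 g, pd 1 (pd 1 (pd 1 (u i))) t * ξ ^ i

section helpers
variable {g : ℕ} {E : Type*} [NormedAddCommGroup E] [NormedSpace ℝ E]

lemma pd_eq {i : ℕ} (h : 1 ≤ i ∧ i ≤ g) (f : (Fin g → ℝ) → E) (t : Fin g → ℝ) :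
    pd i f t = fderiv ℝ f t (Pi.single (⟨i - 1, by omega⟩ : Fin g) 1) := by
  simp [pd, h]

lemma pd_out {i : ℕ} (h : ¬ (1 ≤ i ∧ i ≤ g)) (f : (Fin g → ℝ) → E) :
    pd i f = fun _ => 0 := by
  funext t; simp [pd, h]

lemma pd_congr_nhds {i : ℕ} {f f' : (Fin g → ℝ) → E} {t : Fin g → ℝ}
    (h : f =ᶠ[nhds t] f') : pd i f t = pd i f' t := by
  unfold pd
  split
  · rw [h.fderiv_eq]
  · rfl

lemma pd_congr_on {U : Set (Fin g → ℝ)} (hUo : IsOpen U) {i : ℕ}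
    {f f' : (Fin g → ℝ) → E} {t : Fin g → ℝ} (ht : t ∈ U)
    (h : ∀ s ∈ U, f s = f' s) : pd i f t = pd i f' t :=
  pd_congr_nhds (Filter.eventuallyEq_of_mem (hUo.mem_nhds ht) h)

lemma pd_const (i : ℕ) (c : E) (t : Fin g → ℝ) : pd i (fun _ => c) t = 0 := by
  unfold pd; split <;> simp

lemma pd_add {i : ℕ} {f f' : (Fin g → ℝ) → E} {t : Fin g → ℝ}
    (hf : DifferentiableAt ℝ f t) (hf' : DifferentiableAt ℝ f' t) :
    pd i (fun s => f s + f' s) t = pd i f t + pd i f' t := by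
  unfold pd; split
  · rw [fderiv_fun_add hf hf']; rfl
  · simp

lemma pd_smul {i : ℕ} {c : (Fin g → ℝ) → ℝ} {f : (Fin g → ℝ) → E} {t : Fin g → ℝ}
    (hc : DifferentiableAt ℝ c t) (hf : DifferentiableAt ℝ f t) :
    pd i (fun s => c s • f s) t = pd i c t • f t + c t • pd i f t := by
  unfold pd; split
  · rw [fderiv_fun_smul hc hf]; simp [add_comm]
  · simp

lemma pd_mul {i : ℕ} {f f' : (Fin g → ℝ) → ℂ} {t : Fin g → ℝ}
    (hf : DifferentiableAt ℝ f t) (hf' : DifferentiableAt ℝ f' t) :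
    pd i (fun s => f s * f' s) t = pd i f t * f' t + f t * pd i f' t := by
  unfold pd; split
  · rw [fderiv_fun_mul hf hf']; simp; ring
  · simp

lemma pd_const_smul {i : ℕ} (a : ℝ) {f : (Fin g → ℝ) → E} {t : Fin g → ℝ}
    (hf : DifferentiableAt ℝ f t) :
    pd i (fun s => a • f s) t = a • pd i f t := by
  unfold pd; split
  · rw [fderiv_fun_const_smul hf]; rfl
  · simp

lemma diffAt_of_contDiffOn {U : Set (Fin g → ℝ)} (hUo : IsOpen U)
    {f : (Fin g → ℝ) → E} (hf : ContDiffOn ℝ (⊤ : ℕ∞) f U) {t : Fin g → ℝ} (ht : t ∈ U) :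
    DifferentiableAt ℝ f t := by
  have := (hf t ht).contDiffAt (hUo.mem_nhds ht)
  exact this.differentiableAt (by simp)

lemma pd_contDiffOn {U : Set (Fin g → ℝ)} (hUo : IsOpen U) (i : ℕ)
    {f : (Fin g → ℝ) → E} (hf : ContDiffOn ℝ (⊤ : ℕ∞) f U) :
    ContDiffOn ℝ (⊤ : ℕ∞) (pd i f) U := by
  by_cases h : 1 ≤ i ∧ i ≤ g
  · have hfd : ContDiffOn ℝ (⊤ : ℕ∞) (fderiv ℝ f) U := by
      have := (contDiffOn_infty_iff_fderiv_of_isOpen (𝕜 := ℝ) (f := f) hUo).1 ?_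
      · exact this.2
      · exact_mod_cast hf
    have : ContDiffOn ℝ (⊤ : ℕ∞) (fun t => fderiv ℝ f t (Pi.single (⟨i - 1, by omega⟩ : Fin g) 1)) U := by
      exact hfd.clm_apply contDiffOn_const
    apply this.congr
    intro t _
    simp [pd, h]
  · rw [pd_out h]
    exact contDiffOn_const

lemma pd_comm {U : Set (Fin g → ℝ)} (hUo : IsOpen U) (i j : ℕ)
    {f : (Fin g → ℝ) → E} (hf : ContDiffOn ℝ (⊤ : ℕ∞) f U) {t : Fin g → ℝ} (ht : t ∈ U) :
    pd i (pd j f) t = pd j (pd i f) t := by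
  by_cases hi : 1 ≤ i ∧ i ≤ g
  · by_cases hj : 1 ≤ j ∧ j ≤ g
    · -- the real case
      have hdf : DifferentiableAt ℝ (fderiv ℝ f) t :=
        diffAt_of_contDiffOn hUo ((contDiffOn_infty_iff_fderiv_of_isOpen (𝕜 := ℝ)
          (f := f) hUo).1 (by exact_mod_cast hf)).2 ht
      have hsymm : IsSymmSndFDerivAt ℝ f t := by
        apply ContDiffAt.isSymmSndFDerivAt (n := (⊤ : ℕ∞))
        · exact (hf t ht).contDiffAt (hUo.mem_nhds ht)
        · rw [minSmoothness_of_isRCLikeNormedField]; exact_mod_cast ENat.natCast_le_of_coe_top_le_withTop le_rfl 2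
      have key : ∀ (a b : ℕ) (ha : 1 ≤ a ∧ a ≤ g) (hb : 1 ≤ b ∧ b ≤ g),
          pd a (pd b f) t = fderiv ℝ (fderiv ℝ f) t
            (Pi.single (⟨a - 1, by omega⟩ : Fin g) 1) (Pi.single (⟨b - 1, by omega⟩ : Fin g) 1) := by
        intro a b ha hb
        rw [pd_eq ha]
        have : (pd b f) = fun s => fderiv ℝ f s (Pi.single (⟨b - 1, by omega⟩ : Fin g) 1) := by
          funext s; rw [pd_eq hb]
        rw [this]
        rw [fderiv_clm_apply hdf (differentiableAt_const _)]
        simp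
      rw [key i j hi hj, key j i hj hi, hsymm.eq]
    · rw [pd_out hj, pd_const, pd_out (f := pd i f) hj]
  · rw [pd_out (f := pd j f) hi, pd_out hi, pd_const]

end helpers

section telsum

lemma icc_split_top (g : ℕ) (hg : 1 ≤ g) : Finset.Icc 2 (g+1) = insert (g+1) (Finset.Icc 2 g) := by
  ext x; simp only [Finset.mem_Icc, Finset.mem_insert]; omega

lemma icc_split_bot (g : ℕ) (hg : 1 ≤ g) : Finset.Icc 1 g = insert 1 (Finset.Icc 2 g) := by
  ext x; simp only [Finset.mem_Icc, Finset.mem_insert]; omega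

lemma tel_sum (g : ℕ) (hg : 1 ≤ g) (F : ℕ → ℂ) (hFtop : F (g+1) = 0) (ξ : ℂ) :
    (∑ k ∈ Finset.Icc 1 g, ξ^k * F (k+1)) * ξ
      = (∑ k ∈ Finset.Icc 1 g, ξ^k * F k) - ξ * F 1 := by
  have h2 : (∑ k ∈ Finset.Icc 1 g, ξ^k * F (k+1)) * ξ
      = ∑ j ∈ Finset.Icc 2 (g+1), ξ^j * F j := by
    rw [← Finset.map_add_right_Icc 1 g 1, Finset.sum_map, Finset.sum_mul]
    refine Finset.sum_congr rfl fun k _ => ?_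
    simp only [addRightEmbedding_apply]
    ring
  have h3 : ∑ j ∈ Finset.Icc 2 (g+1), ξ^j * F j = ∑ j ∈ Finset.Icc 2 g, ξ^j * F j := by
    rw [icc_split_top g hg, Finset.sum_insert (by simp), hFtop]
    ring
  have h1 : ∑ k ∈ Finset.Icc 1 g, ξ^k * F k
      = ξ * F 1 + ∑ k ∈ Finset.Icc 2 g, ξ^k * F k := by
    rw [icc_split_bot g hg, Finset.sum_insert (by simp)]
    ring
  rw [h2, h3, h1]
  ring

end telsum

section ek

variable {g : ℕ} {u : ℕ → (Fin g → ℝ) → ℝ} {ξ : ℝ} {α : ℕ → ℂ}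
  {U : Set (Fin g → ℝ)} {Ψ : (Fin g → ℝ) → ℂ}

lemma ekey (hg : 1 ≤ g) (hu : ∀ i, ContDiff ℝ (⊤ : ℕ∞) (u i)) (hUo : IsOpen U)
    (hΨ : ContDiffOn ℝ (⊤ : ℕ∞) Ψ U)
    (hL : ∀ t ∈ U, opLC u Ψ t = ((ξ⁻¹ : ℝ) : ℂ) * Ψ t)
    (hUeq : ∀ k, 1 ≤ k → k ≤ g → ∀ t ∈ U, opUC u k Ψ t = α k * Ψ t)
    (k : ℕ) (hk1 : 1 ≤ k) (hkg : k ≤ g) (t : Fin g → ℝ) (ht : t ∈ U) :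
    2 * ((pd k (u 1) t : ℝ) : ℂ) * Ψ t + 4 * ((ξ⁻¹ : ℝ) : ℂ) * pd k Ψ t
      - 2 * ((u k t : ℝ) : ℂ) * pd 1 Ψ t - ((pd 1 (u k) t : ℝ) : ℂ) * Ψ t
      - 4 * pd (k+1) Ψ t = 4 * α k * Ψ t := by
  have hΨd : DifferentiableAt ℝ Ψ t := diffAt_of_contDiffOn hUo hΨ ht
  have hud : ∀ i, DifferentiableAt ℝ (u i) t := fun i =>
    ((hu i).differentiable (by simp)) t
  have hpd1Ψ : ContDiffOn ℝ (⊤ : ℕ∞) (pd 1 Ψ) U := pd_contDiffOn hUo 1 hΨ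
  have hpdkΨ : ContDiffOn ℝ (⊤ : ℕ∞) (pd k Ψ) U := pd_contDiffOn hUo k hΨ
  have hpdkΨd : DifferentiableAt ℝ (pd k Ψ) t := diffAt_of_contDiffOn hUo hpdkΨ ht
  -- the 𝓤_k equation at t
  have h0 := hUeq k hk1 hkg t ht
  unfold opUC opAC at h0
  -- rewrite third-order term
  have e1 : pd 1 (pd 1 (pd k Ψ)) t = pd 1 (pd k (pd 1 Ψ)) t :=
    pd_congr_on hUo ht (fun s hs => pd_comm hUo 1 k hΨ hs)
  have e2 : pd 1 (pd k (pd 1 Ψ)) t = pd k (pd 1 (pd 1 Ψ)) t :=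
    pd_comm hUo 1 k hpd1Ψ ht
  have e3 : pd k (pd 1 (pd 1 Ψ)) t
      = pd k (fun s => u 1 s • Ψ s + (ξ⁻¹ : ℝ) • Ψ s) t := by
    refine pd_congr_on hUo ht (fun s hs => ?_)
    have := hL s hs
    unfold opLC at this
    rw [show ((ξ⁻¹ : ℝ) : ℂ) * Ψ s = (ξ⁻¹ : ℝ) • Ψ s from (Complex.real_smul).symm] at this
    linear_combination this
  have e4 : pd k (fun s => u 1 s • Ψ s + (ξ⁻¹ : ℝ) • Ψ s) t
      = pd k (u 1) t • Ψ t + u 1 t • pd k Ψ t + (ξ⁻¹ : ℝ) • pd k Ψ t := by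
    rw [pd_add (f := fun s => u 1 s • Ψ s) (f' := fun s => (ξ⁻¹ : ℝ) • Ψ s) ((hud 1).smul hΨd) (hΨd.const_smul (ξ⁻¹ : ℝ)), pd_smul (hud 1) hΨd,
      pd_const_smul _ hΨd]
  have e5 : pd k (fun s => u 1 s • Ψ s) t = pd k (u 1) t • Ψ t + u 1 t • pd k Ψ t :=
    pd_smul (hud 1) hΨd
  have e6 : pd 1 (fun s => u k s • Ψ s) t = pd 1 (u k) t • Ψ t + u k t • pd 1 Ψ t :=
    pd_smul (hud k) hΨd
  rw [e1, e2, e3, e4, e5, e6] at h0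
  simp only [Complex.real_smul] at h0
  push_cast at h0 ⊢
  linear_combination 4 * h0

end ek

section keyid

variable {g : ℕ} {u : ℕ → (Fin g → ℝ) → ℝ} {ξ : ℝ} {α : ℕ → ℂ}
  {U : Set (Fin g → ℝ)} {Ψ : (Fin g → ℝ) → ℂ}

lemma keyid (hg : 1 ≤ g) (hu : ∀ i, ContDiff ℝ (⊤ : ℕ∞) (u i)) (hξ : ξ ≠ 0)
    (hUo : IsOpen U)
    (hΨ : ContDiffOn ℝ (⊤ : ℕ∞) Ψ U)
    (hL : ∀ t ∈ U, opLC u Ψ t = ((ξ⁻¹ : ℝ) : ℂ) * Ψ t)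
    (hUeq : ∀ k, 1 ≤ k → k ≤ g → ∀ t ∈ U, opUC u k Ψ t = α k * Ψ t)
    (t : Fin g → ℝ) (ht : t ∈ U) :
    ((2 - bfu u ξ t : ℝ) : ℂ) * pd 1 Ψ t
      = (2 * (∑ k ∈ Finset.Icc 1 g, α k * (ξ : ℂ)^k)
          + ((bfu1 u ξ t : ℝ) : ℂ)/2
          - (∑ k ∈ Finset.Icc 1 g, (ξ : ℂ)^k * ((pd k (u 1) t : ℝ) : ℂ))) * Ψ t := by
  set D : ℂ := ∑ k ∈ Finset.Icc 1 g, (ξ : ℂ)^k * pd k Ψ t with hD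
  set Tel : ℂ := ∑ k ∈ Finset.Icc 1 g, (ξ : ℂ)^k * pd (k+1) Ψ t with hTel
  set SP : ℂ := ∑ k ∈ Finset.Icc 1 g, (ξ : ℂ)^k * ((pd k (u 1) t : ℝ) : ℂ) with hSP
  set Su : ℂ := ∑ k ∈ Finset.Icc 1 g, (ξ : ℂ)^k * ((u k t : ℝ) : ℂ) with hSu
  set S1 : ℂ := ∑ k ∈ Finset.Icc 1 g, (ξ : ℂ)^k * ((pd 1 (u k) t : ℝ) : ℂ) with hS1
  set A : ℂ := ∑ k ∈ Finset.Icc 1 g, α k * (ξ : ℂ)^k with hA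
  have hsum : 2 * SP * Ψ t + 4 * ((ξ⁻¹ : ℝ) : ℂ) * D - 2 * Su * pd 1 Ψ t
      - S1 * Ψ t - 4 * Tel = 4 * A * Ψ t := by
    have step1 : 2 * SP * Ψ t + 4 * ((ξ⁻¹ : ℝ) : ℂ) * D - 2 * Su * pd 1 Ψ t
        - S1 * Ψ t - 4 * Tel
        = ∑ k ∈ Finset.Icc 1 g, (ξ : ℂ)^k *
            (2 * ((pd k (u 1) t : ℝ) : ℂ) * Ψ t + 4 * ((ξ⁻¹ : ℝ) : ℂ) * pd k Ψ t
              - 2 * ((u k t : ℝ) : ℂ) * pd 1 Ψ t - ((pd 1 (u k) t : ℝ) : ℂ) * Ψ t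
              - 4 * pd (k+1) Ψ t) := by
      rw [hD, hTel, hSP, hSu, hS1]
      simp only [Finset.mul_sum, Finset.sum_mul, ← Finset.sum_add_distrib,
        ← Finset.sum_sub_distrib]
      refine Finset.sum_congr rfl fun k _ => ?_
      ring
    have step2 : ∑ k ∈ Finset.Icc 1 g, (ξ : ℂ)^k *
            (2 * ((pd k (u 1) t : ℝ) : ℂ) * Ψ t + 4 * ((ξ⁻¹ : ℝ) : ℂ) * pd k Ψ t
              - 2 * ((u k t : ℝ) : ℂ) * pd 1 Ψ t - ((pd 1 (u k) t : ℝ) : ℂ) * Ψ t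
              - 4 * pd (k+1) Ψ t)
        = ∑ k ∈ Finset.Icc 1 g, (ξ : ℂ)^k * (4 * α k * Ψ t) := by
      refine Finset.sum_congr rfl fun k hk => ?_
      rw [Finset.mem_Icc] at hk
      rw [ekey hg hu hUo hΨ hL hUeq k hk.1 hk.2 t ht]
    have step3 : ∑ k ∈ Finset.Icc 1 g, (ξ : ℂ)^k * (4 * α k * Ψ t) = 4 * A * Ψ t := by
      rw [hA, Finset.mul_sum, Finset.sum_mul]
      refine Finset.sum_congr rfl fun k _ => ?_
      ring
    rw [step1, step2, step3]
  have htel : Tel * (ξ : ℂ) = D - (ξ : ℂ) * pd 1 Ψ t := by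
    rw [hTel, hD]
    refine tel_sum g hg (fun k => pd k Ψ t) ?_ (ξ : ℂ)
    show pd (g+1) Ψ t = 0
    rw [pd_out (by rintro ⟨-, h2⟩; omega)]
  have hξC : (ξ : ℂ) ≠ 0 := by exact_mod_cast hξ
  have hinv : ((ξ⁻¹ : ℝ) : ℂ) * (ξ : ℂ) = 1 := by
    rw [show ((ξ⁻¹ : ℝ) : ℂ) = (ξ : ℂ)⁻¹ by push_cast; ring]
    exact inv_mul_cancel₀ hξC
  have hcastu : ((bfu u ξ t : ℝ) : ℂ) = Su := by
    rw [hSu]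
    unfold bfu
    push_cast
    refine Finset.sum_congr rfl fun k _ => ?_
    ring
  have hcast1 : ((bfu1 u ξ t : ℝ) : ℂ) = S1 := by
    rw [hS1]
    unfold bfu1
    push_cast
    refine Finset.sum_congr rfl fun k _ => ?_
    ring
  apply mul_left_cancel₀ hξC
  push_cast
  linear_combination (-(ξ : ℂ) * pd 1 Ψ t) * hcastu - ((ξ : ℂ) * Ψ t / 2) * hcast1
    + ((ξ : ℂ)/2) * hsum + 2 * htel - 2 * D * hinv

end keyid

/-- Fix real `ξ ≠ 0` and complex constants `α_1, …, α_g`. Let `U` be a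
nonempty connected open set on which `2 − 𝐮(ξ)` never vanishes. If `Ψ_1, Ψ_2` are
smooth, nowhere vanishing on `U`, and both satisfy `𝓛Ψ = ξ⁻¹·Ψ` and `𝓤_kΨ = α_k·Ψ`
for all `k`, then `Ψ_1 = λ·Ψ_2` on `U` for some constant `λ ∈ ℂ`. -/
theorem statement8 (g : ℕ) (hg : 1 ≤ g) (u : ℕ → (Fin g → ℝ) → ℝ)
    (hu : ∀ i, ContDiff ℝ (⊤ : ℕ∞) (u i))
    (ξ : ℝ) (hξ : ξ ≠ 0) (α : ℕ → ℂ)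
    (U : Set (Fin g → ℝ)) (hUne : U.Nonempty) (hUo : IsOpen U) (hUc : IsPreconnected U)
    (hnv : ∀ t ∈ U, 2 - bfu u ξ t ≠ 0)
    (Ψ₁ Ψ₂ : (Fin g → ℝ) → ℂ)
    (hΨ₁ : ContDiffOn ℝ (⊤ : ℕ∞) Ψ₁ U) (hΨ₂ : ContDiffOn ℝ (⊤ : ℕ∞) Ψ₂ U)
    (hz₁ : ∀ t ∈ U, Ψ₁ t ≠ 0) (hz₂ : ∀ t ∈ U, Ψ₂ t ≠ 0)
    (hL₁ : ∀ t ∈ U, opLC u Ψ₁ t = ((ξ⁻¹ : ℝ) : ℂ) * Ψ₁ t)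
    (hL₂ : ∀ t ∈ U, opLC u Ψ₂ t = ((ξ⁻¹ : ℝ) : ℂ) * Ψ₂ t)
    (hU₁ : ∀ k, 1 ≤ k → k ≤ g → ∀ t ∈ U, opUC u k Ψ₁ t = α k * Ψ₁ t)
    (hU₂ : ∀ k, 1 ≤ k → k ≤ g → ∀ t ∈ U, opUC u k Ψ₂ t = α k * Ψ₂ t) :
    ∃ lam : ℂ, ∀ t ∈ U, Ψ₁ t = lam * Ψ₂ t := by
  obtain ⟨t₀, ht₀⟩ := hUne
  set φ : (Fin g → ℝ) → ℂ := fun s => Ψ₁ s * (Ψ₂ s)⁻¹ with hφ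
  have hd₁ : ∀ t ∈ U, DifferentiableAt ℝ Ψ₁ t := fun t ht => diffAt_of_contDiffOn hUo hΨ₁ ht
  have hd₂ : ∀ t ∈ U, DifferentiableAt ℝ Ψ₂ t := fun t ht => diffAt_of_contDiffOn hUo hΨ₂ ht
  have hφd : ∀ t ∈ U, DifferentiableAt ℝ φ t := fun t ht =>
    (hd₁ t ht).mul ((hd₂ t ht).inv (hz₂ t ht))
  have hψmul : ∀ t ∈ U, φ t * Ψ₂ t = Ψ₁ t := by
    intro t ht
    simp only [hφ]
    rw [mul_assoc, inv_mul_cancel₀ (hz₂ t ht), mul_one]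
  -- Step 1 : the first Wronskian-type quantity vanishes
  have hV1 : ∀ t ∈ U, Ψ₂ t * pd 1 Ψ₁ t - Ψ₁ t * pd 1 Ψ₂ t = 0 := by
    intro t ht
    have k₁ := keyid hg hu hξ hUo hΨ₁ hL₁ hU₁ t ht
    have k₂ := keyid hg hu hξ hUo hΨ₂ hL₂ hU₂ t ht
    have hne : ((2 - bfu u ξ t : ℝ) : ℂ) ≠ 0 := Complex.ofReal_ne_zero.2 (hnv t ht)
    have h0 : ((2 - bfu u ξ t : ℝ) : ℂ) * (Ψ₂ t * pd 1 Ψ₁ t - Ψ₁ t * pd 1 Ψ₂ t) = 0 := by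
      linear_combination (Ψ₂ t) * k₁ - (Ψ₁ t) * k₂
    rcases mul_eq_zero.mp h0 with h | h
    · exact absurd h hne
    · exact h
  -- Step 2 : all Wronskian-type quantities vanish, by induction
  have hVk : ∀ k, 1 ≤ k → k ≤ g → ∀ t ∈ U,
      Ψ₂ t * pd k Ψ₁ t - Ψ₁ t * pd k Ψ₂ t = 0 := by
    intro k hk1
    induction k, hk1 using Nat.le_induction with
    | base => intro _ t ht; exact hV1 t ht
    | succ k hk ih =>
      intro hkg t ht
      have hkg' : k ≤ g := by omega
      have e₁ := ekey hg hu hUo hΨ₁ hL₁ hU₁ k hk hkg' t ht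
      have e₂ := ekey hg hu hUo hΨ₂ hL₂ hU₂ k hk hkg' t ht
      have hVk0 := ih hkg' t ht
      have hV10 := hV1 t ht
      linear_combination ((ξ⁻¹ : ℝ) : ℂ) * hVk0 - (((u k t : ℝ) : ℂ)/2) * hV10
        - (Ψ₂ t / 4) * e₁ + (Ψ₁ t / 4) * e₂
  -- Step 3 : all partial derivatives of the quotient vanish
  have hpdφ : ∀ k, 1 ≤ k → k ≤ g → ∀ t ∈ U, pd k φ t = 0 := by
    intro k h1 h2 t ht
    have hV := hVk k h1 h2 t ht
    have hexp : pd k Ψ₁ t = pd k φ t * Ψ₂ t + φ t * pd k Ψ₂ t := by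
      have heq : ∀ s ∈ U, Ψ₁ s = (fun s => φ s * Ψ₂ s) s := by
        intro s hs
        exact (hψmul s hs).symm
      rw [pd_congr_on hUo ht heq]
      exact pd_mul (hφd t ht) (hd₂ t ht)
    have h2' : Ψ₂ t * Ψ₂ t * pd k φ t = 0 := by
      linear_combination hV - (Ψ₂ t) * hexp - (pd k Ψ₂ t) * (hψmul t ht)
    rcases mul_eq_zero.mp h2' with h | h
    · exact absurd h (mul_ne_zero (hz₂ t ht) (hz₂ t ht))
    · exact h
  -- Step 4 : the full derivative of the quotient vanishes
  have hfd : ∀ t ∈ U, fderiv ℝ φ t = 0 := by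
    intro t ht
    apply ContinuousLinearMap.ext
    intro v
    have hv : v = ∑ i : Fin g, v i • (Pi.single i 1 : Fin g → ℝ) := by
      conv_lhs => rw [← Finset.univ_sum_single v]
      refine Finset.sum_congr rfl fun i _ => ?_
      rw [← Pi.single_smul, smul_eq_mul, mul_one]
    rw [hv, map_sum, ContinuousLinearMap.zero_apply]
    refine Finset.sum_eq_zero fun i _ => ?_
    rw [map_smul]
    have hilt : i.1 < g := i.isLt
    have hz : pd (i.1 + 1) φ t = 0 := hpdφ (i.1 + 1) (by omega) (by omega) t ht
    have hx : fderiv ℝ φ t (Pi.single i (1:ℝ)) = pd (i.1 + 1) φ t := by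
      rw [pd_eq ⟨by omega, by omega⟩]
      congr 2
    rw [hx, hz, smul_zero]
  -- Step 5 : local constancy
  have hloc : ∀ t, ∀ ht : t ∈ U, ∃ ε > 0, Metric.ball t ε ⊆ U ∧
      ∀ s ∈ Metric.ball t ε, φ s = φ t := by
    intro t ht
    obtain ⟨ε, hε, hball⟩ := Metric.isOpen_iff.mp hUo t ht
    refine ⟨ε, hε, hball, fun s hs => ?_⟩
    exact (convex_ball t ε).is_const_of_fderivWithin_eq_zero
      (fun x hx => (hφd x (hball hx)).differentiableWithinAt)
      (fun x hx => by
        rw [fderivWithin_of_isOpen Metric.isOpen_ball hx]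
        exact hfd x (hball hx))
      hs (Metric.mem_ball_self hε)
  choose ε hε hball hconst using hloc
  refine ⟨φ t₀, fun t ht => ?_⟩
  -- Step 6 : global constancy on the preconnected set
  have hconstant : φ t = φ t₀ := by
    by_contra hneq
    set v := ⋃ (s : Fin g → ℝ) (hs : s ∈ U ∧ φ s = φ t₀), Metric.ball s (ε s hs.1) with hv
    set w := ⋃ (s : Fin g → ℝ) (hs : s ∈ U ∧ φ s ≠ φ t₀), Metric.ball s (ε s hs.1) with hw
    have hvopen : IsOpen v := isOpen_iUnion fun s => isOpen_iUnion fun _ => Metric.isOpen_ball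
    have hwopen : IsOpen w := isOpen_iUnion fun s => isOpen_iUnion fun _ => Metric.isOpen_ball
    have hsub : U ⊆ v ∪ w := by
      intro s hs
      by_cases hc : φ s = φ t₀
      · exact Or.inl (Set.mem_iUnion₂.2 ⟨s, ⟨hs, hc⟩, Metric.mem_ball_self (hε s hs)⟩)
      · exact Or.inr (Set.mem_iUnion₂.2 ⟨s, ⟨hs, hc⟩, Metric.mem_ball_self (hε s hs)⟩)
    have hv0 : (U ∩ v).Nonempty :=
      ⟨t₀, ht₀, Set.mem_iUnion₂.2 ⟨t₀, ⟨ht₀, rfl⟩, Metric.mem_ball_self (hε t₀ ht₀)⟩⟩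
    have hw0 : (U ∩ w).Nonempty :=
      ⟨t, ht, Set.mem_iUnion₂.2 ⟨t, ⟨ht, hneq⟩, Metric.mem_ball_self (hε t ht)⟩⟩
    obtain ⟨z, hzU, hzv, hzw⟩ := hUc v w hvopen hwopen hsub hv0 hw0
    obtain ⟨s₁, hs₁, hz₁m⟩ := Set.mem_iUnion₂.1 hzv
    obtain ⟨s₂, hs₂, hz₂m⟩ := Set.mem_iUnion₂.1 hzw
    have e1 : φ z = φ s₁ := hconst s₁ hs₁.1 z hz₁m
    have e2 : φ z = φ s₂ := hconst s₂ hs₂.1 z hz₂m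
    exact hs₂.2 (by rw [← e2, e1, hs₁.2])
  rw [← hψmul t ht, hconstant]
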